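/- arXiv:2503.02074 — 3 statements merged into one kernel-verified Lean document; each statement's English description precedes it below -/
import Mathlib

section
/- Let I ⊆ ℝ be a nondegenerate interval containing one of its endpoints s, and let κ : I → I be continuously differentiable and strictly increasing with κ(s) = s, κ'(s) < 1, and κ(x) ≠ x for every x in the interior of I. Let q : I → (0,∞) be positive, bounded, and continuously differentiable with q'(s) ≠ 0. Then for every integer m ≥ 0 and every x ∈ {s} ∪ interior(I), the limit lim_{t→∞} ∏_{i=m}^t q(κ^{[i]}(x))/q(s) exists and is a positive real number. -/
set_option maxHeartbeats 1000000

open Set Filter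

/-- `|log y| ≤ 2|y - 1|` for `y ≥ 1/2`. -/
lemma stmt10_abs_log_le_two_mul {y : ℝ} (h : 1/2 ≤ y) : |Real.log y| ≤ 2 * |y - 1| := by
  have hy0 : (0:ℝ) < y := by linarith
  rcases le_or_gt 1 y with h1 | h1
  · have ha : |Real.log y| = Real.log y := abs_of_nonneg (Real.log_nonneg h1)
    have hb : |y - 1| = y - 1 := abs_of_nonneg (by linarith)
    have := Real.log_le_sub_one_of_pos hy0
    rw [ha, hb]; linarith
  · have ha : |Real.log y| = -Real.log y := abs_of_nonpos (Real.log_nonpos hy0.le h1.le)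
    have hb : |y - 1| = -(y - 1) := abs_of_neg (by linarith)
    have h2 := Real.log_le_sub_one_of_pos (inv_pos.mpr hy0)
    rw [Real.log_inv] at h2
    have h3 : y⁻¹ ≤ 2 := by
      rw [inv_le_comm₀ hy0 (by norm_num)]; linarith
    rw [ha, hb]
    nlinarith [mul_nonneg (by linarith : (0:ℝ) ≤ 1 - y) (by linarith : (0:ℝ) ≤ 2 - y⁻¹),
      mul_inv_cancel₀ hy0.ne']

/-- If a positive sequence approaches `c > 0` at a geometric rate, then the products
`∏_{i=m}^t a i / c` converge to a positive limit. -/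
lemma stmt10_prod_tendsto (a : ℕ → ℝ) (c C lam : ℝ) (hc : 0 < c)
    (ha : ∀ i, 0 < a i) (hlam0 : 0 < lam) (hlam1 : lam < 1)
    (hbd : ∀ i, |a i - c| ≤ C * lam ^ i) (m : ℕ) :
    ∃ L : ℝ, 0 < L ∧
      Tendsto (fun t : ℕ => ∏ i ∈ Finset.Icc m t, a i / c) atTop (nhds L) := by
  set b : ℕ → ℝ := fun i => Real.log (a i / c) with hbdef
  have hratio : ∀ i, |a i / c - 1| ≤ C / c * lam ^ i := by
    intro i
    have h1 : a i / c - 1 = (a i - c) / c := by field_simp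
    have h2 : C / c * lam ^ i = C * lam ^ i / c := by ring
    rw [h1, h2, abs_div, abs_of_pos hc]
    gcongr
    exact hbd i
  obtain ⟨N, hN⟩ : ∃ N, C / c * lam ^ N < 1/2 := by
    have ht : Tendsto (fun n : ℕ => C / c * lam ^ n) atTop (nhds 0) := by
      simpa using (tendsto_pow_atTop_nhds_zero_of_lt_one hlam0.le hlam1).const_mul (C / c)
    exact ((ht.eventually (gt_mem_nhds (by norm_num : (0:ℝ) < 1/2))).exists)
  have hkey : ∀ i, N ≤ i → |b i| ≤ (2 * (C / c)) * lam ^ i := by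
    intro i hi
    have hle : C / c * lam ^ i ≤ C / c * lam ^ N := by
      have hC : 0 ≤ C / c := by
        have := (abs_nonneg (a 0 - c)).trans (hbd 0)
        simp only [pow_zero, mul_one] at this
        positivity
      exact mul_le_mul_of_nonneg_left (pow_le_pow_of_le_one hlam0.le hlam1.le hi) hC
    have hr := hratio i
    have hhalf : |a i / c - 1| ≤ 1/2 := by linarith
    have hy : 1/2 ≤ a i / c := by
      have := abs_le.mp hhalf
      linarith [this.1]
    have := stmt10_abs_log_le_two_mul hy
    calc |b i| ≤ 2 * |a i / c - 1| := this
      _ ≤ 2 * (C / c * lam ^ i) := by linarith [hr]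
      _ = (2 * (C / c)) * lam ^ i := by ring
  have hsum : Summable b := by
    rw [← summable_nat_add_iff N]
    apply Summable.of_abs
    refine Summable.of_nonneg_of_le (fun n => abs_nonneg _) (fun n => ?_)
      ((summable_geometric_of_lt_one hlam0.le hlam1).mul_left (2 * (C / c) * lam ^ N))
    have := hkey (n + N) (by omega)
    calc |b (n + N)| ≤ (2 * (C / c)) * lam ^ (n + N) := this
      _ = (2 * (C / c) * lam ^ N) * lam ^ n := by rw [pow_add]; ring
  have hT := hsum.hasSum.tendsto_sum_nat
  set T := ∑' i, b i
  refine ⟨Real.exp (T - ∑ i ∈ Finset.range m, b i), Real.exp_pos _, ?_⟩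
  have hprod : ∀ t, m ≤ t →
      (∏ i ∈ Finset.Icc m t, a i / c) =
        Real.exp ((∑ i ∈ Finset.range (t+1), b i) - ∑ i ∈ Finset.range m, b i) := by
    intro t ht
    rw [← Finset.sum_Ico_eq_sub _ (by omega : m ≤ t + 1), Finset.Ico_add_one_right_eq_Icc, Real.exp_sum]
    exact Finset.prod_congr rfl fun i _ => (Real.exp_log (div_pos (ha i) hc)).symm
  have htend : Tendsto (fun t : ℕ =>
      Real.exp ((∑ i ∈ Finset.range (t+1), b i) - ∑ i ∈ Finset.range m, b i)) atTop
      (nhds (Real.exp (T - ∑ i ∈ Finset.range m, b i))) := by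
    apply (Real.continuous_exp.continuousAt).tendsto.comp
    exact (hT.comp (tendsto_add_atTop_nat 1)).sub_const _
  exact htend.congr' ((eventually_ge_atTop m).mono fun t ht => (hprod t ht).symm)

/-- The main geometric estimate, in the case where `s` is the left endpoint of `I`:
`|q(κ^[i] x) - q s| ≤ C ⬝ lam^i`. -/
lemma stmt10_geom_bound_left (I : Set ℝ) (κ κ' q q' : ℝ → ℝ) (s : ℝ)
    (hI : I.OrdConnected) (hsI : s ∈ I) (hnd : ∃ y ∈ I, y ≠ s)
    (hl : ∀ x ∈ I, s ≤ x)
    (hmaps : Set.MapsTo κ I I)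
    (hderiv : ∀ x ∈ I, HasDerivWithinAt κ (κ' x) I x)
    (hderiv_cont : ContinuousOn κ' I)
    (hfix : κ s = s)
    (hslope : κ' s < 1)
    (hnofix : ∀ x ∈ interior I, κ x ≠ x)
    (hq_pos : ∀ x ∈ I, 0 < q x)
    (hq_bdd : ∃ B, ∀ x ∈ I, q x ≤ B)
    (hq_deriv : ∀ x ∈ I, HasDerivWithinAt q (q' x) I x)
    (hq_deriv_cont : ContinuousOn q' I) :
    ∀ x ∈ insert s (interior I), ∃ C lam : ℝ, 0 < lam ∧ lam < 1 ∧
      ∀ i : ℕ, |q (κ^[i] x) - q s| ≤ C * lam ^ i := by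
  set lam : ℝ := (max (κ' s) 0 + 1) / 2 with hlamdef
  have hmax0 : (0:ℝ) ≤ max (κ' s) 0 := le_max_right _ _
  have hmax1 : max (κ' s) 0 < 1 := max_lt hslope one_pos
  have hlam0 : 0 < lam := by rw [hlamdef]; linarith
  have hlam1 : lam < 1 := by rw [hlamdef]; linarith
  have hclam : κ' s < lam := by
    have := le_max_left (κ' s) 0
    rw [hlamdef]; linarith
  intro x hx
  rcases hx with rfl | hx
  · -- x = s
    exact ⟨0, lam, hlam0, hlam1, fun i => by rw [Function.iterate_fixed hfix]; simp⟩
  have hsub : ∀ a ∈ I, ∀ b ∈ I, Icc a b ⊆ I := fun a ha b hb => hI.out ha hb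
  -- δ from continuity of κ' at s
  have hev : κ' ⁻¹' (Iio lam) ∈ nhdsWithin s I := (hderiv_cont s hsI) (Iio_mem_nhds hclam)
  rw [Metric.mem_nhdsWithin_iff] at hev
  obtain ⟨δ, hδ0, hδ⟩ := hev
  -- pick the right end b of the small interval J = Icc s b
  obtain ⟨y0, hy0I, hy0ne⟩ := hnd
  have hy0 : s < y0 := lt_of_le_of_ne (hl y0 hy0I) (Ne.symm hy0ne)
  set b : ℝ := min y0 (s + δ / 2) with hbdef
  have hb_gt : s < b := lt_min hy0 (by linarith)
  have hbI : b ∈ I := hsub s hsI y0 hy0I ⟨hb_gt.le, min_le_left _ _⟩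
  have hJI : Icc s b ⊆ I := hsub s hsI b hbI
  have hδJ : ∀ y ∈ Icc s b, κ' y < lam := by
    intro y hy
    apply hδ
    refine ⟨Metric.mem_ball.mpr ?_, hJI hy⟩
    rw [Real.dist_eq, abs_of_nonneg (by linarith [hy.1])]
    have : b ≤ s + δ / 2 := min_le_right _ _
    linarith [hy.2]
  have hκcont : ContinuousOn κ I := fun z hz => (hderiv z hz).continuousWithinAt
  have hJconv : Convex ℝ (Icc s b) := convex_Icc s b
  have hIntJ : interior (Icc s b) ⊆ interior I := interior_mono hJI
  have hDiff : ∀ z ∈ interior (Icc s b), HasDerivAt κ (κ' z) z := fun z hz =>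
    (hderiv z (interior_subset (hIntJ hz))).hasDerivAt (mem_interior_iff_mem_nhds.mp (hIntJ hz))
  have hstep : ∀ y ∈ Icc s b, κ y ≤ s + lam * (y - s) := by
    intro y hy
    have := hJconv.image_sub_le_mul_sub_of_deriv_le (hκcont.mono hJI)
      (fun z hz => (hDiff z hz).differentiableAt.differentiableWithinAt)
      (fun z hz => by
        rw [(hDiff z hz).deriv]
        exact (hδJ z (interior_subset hz)).le)
      s (left_mem_Icc.mpr hb_gt.le) y hy hy.1
    rw [hfix] at this; linarith
  have hmapsJ : Set.MapsTo κ (Icc s b) (Icc s b) := by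
    intro y hy
    refine ⟨hl _ (hmaps (hJI hy)), ?_⟩
    have h1 := hstep y hy
    have h2 : lam * (y - s) ≤ 1 * (y - s) :=
      mul_le_mul_of_nonneg_right hlam1.le (by linarith [hy.1])
    have := hy.2
    linarith
  have hiter : ∀ y ∈ Icc s b, ∀ i : ℕ,
      κ^[i] y ∈ Icc s b ∧ κ^[i] y - s ≤ lam ^ i * (y - s) := by
    intro y hy i
    induction i with
    | zero => exact ⟨hy, by simp⟩
    | succ n ih =>
      obtain ⟨h1, h2⟩ := ih
      rw [Function.iterate_succ_apply']
      refine ⟨hmapsJ h1, ?_⟩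
      have h3 := hstep _ h1
      have h4 : lam * (κ^[n] y - s) ≤ lam * (lam ^ n * (y - s)) :=
        mul_le_mul_of_nonneg_left h2 hlam0.le
      have h5 : lam ^ (n + 1) * (y - s) = lam * (lam ^ n * (y - s)) := by ring
      linarith
  -- every point of the interior of I lies strictly to the right of s
  have hsI_int : ∀ z ∈ interior I, s < z := by
    intro z hz
    rcases eq_or_lt_of_le (hl z (interior_subset hz)) with h | h
    · exfalso
      rw [← h] at hz
      obtain ⟨ε, hε0, hε⟩ := Metric.mem_nhds_iff.mp (mem_interior_iff_mem_nhds.mp hz)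
      have : s - ε / 2 ∈ I :=
        hε (Metric.mem_ball.mpr (by rw [Real.dist_eq]; rw [abs_of_nonpos] <;> linarith))
      linarith [hl _ this]
    · exact h
  have hopen : ∀ z w : ℝ, w ∈ interior I → s < z → z ≤ w → z ∈ interior I := by
    intro z w hw hz hzw
    rcases eq_or_lt_of_le hzw with rfl | h
    · exact hw
    · have hIoo : Ioo s w ⊆ I := fun t ht => hsub s hsI w (interior_subset hw) ⟨ht.1.le, ht.2.le⟩
      exact interior_maximal hIoo isOpen_Ioo ⟨hz, h⟩
  -- κ z < z on the interior of I
  have hsign : ∀ z ∈ interior I, κ z < z := by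
    intro z hz
    rcases lt_trichotomy (κ z) z with h | h | h
    · exact h
    · exact absurd h (hnofix z hz)
    · exfalso
      have hsz : s < z := hsI_int z hz
      set y : ℝ := (s + min b z) / 2 with hydef
      have hminb : s < min b z := lt_min hb_gt hsz
      have hy_s : s < y := by rw [hydef]; linarith
      have hyb : y < b := by
        have h1 : y < min b z := by rw [hydef]; linarith
        exact h1.trans_le (min_le_left _ _)
      have hyz : y < z := by
        have h1 : y < min b z := by rw [hydef]; linarith
        exact h1.trans_le (min_le_right _ _)
      have hyJ : y ∈ Icc s b := ⟨hy_s.le, hyb.le⟩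
      have hκy : κ y < y := by
        have h1 := hstep y hyJ
        have h2 : lam * (y - s) < 1 * (y - s) := mul_lt_mul_of_pos_right hlam1 (by linarith)
        linarith
      have hsubyz : Icc y z ⊆ I := hsub y (hJI hyJ) z (interior_subset hz)
      have hcont : ContinuousOn (fun t => κ t - t) (Icc y z) :=
        (hκcont.mono hsubyz).sub continuousOn_id
      have h0 : (0:ℝ) ∈ Icc (κ y - y) (κ z - z) := ⟨by linarith, by linarith⟩
      obtain ⟨w, hw, hweq⟩ := intermediate_value_Icc hyz.le hcont h0
      have hwint : w ∈ interior I := hopen w z hz (lt_of_lt_of_le hy_s hw.1) hw.2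
      exact hnofix w hwint (by dsimp at hweq; linarith)
  have hxI : ∀ i : ℕ, κ^[i] x ∈ I := fun i => hmaps.iterate i (interior_subset hx)
  -- the orbit eventually enters J
  have hreach : ∃ N, κ^[N] x ∈ Icc s b := by
    by_contra hcon
    push_neg at hcon
    have hgt : ∀ i, b < κ^[i] x := by
      intro i
      by_contra h
      push_neg at h
      exact hcon i ⟨hl _ (hxI i), h⟩
    have hint : ∀ i, κ^[i] x ∈ interior I ∧ κ^[i] x ≤ x := by
      intro i
      induction i with
      | zero => exact ⟨hx, le_refl x⟩
      | succ n ih =>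
        have h1 : κ^[n+1] x = κ (κ^[n] x) := Function.iterate_succ_apply' κ n x
        have hlt : κ (κ^[n] x) < κ^[n] x := hsign _ ih.1
        have hle : κ^[n+1] x ≤ x := by rw [h1]; exact hlt.le.trans ih.2
        exact ⟨hopen _ x hx (hb_gt.trans (hgt (n+1))) hle, hle⟩
    have hdec : ∀ i, κ^[i+1] x < κ^[i] x := fun i => by
      rw [Function.iterate_succ_apply']; exact hsign _ (hint i).1
    have hanti : StrictAnti fun i : ℕ => κ^[i] x := strictAnti_nat_of_succ_lt hdec
    have hbdd : BddBelow (Set.range fun i : ℕ => κ^[i] x) :=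
      ⟨b, by rintro z ⟨i, rfl⟩; exact (hgt i).le⟩
    set l : ℝ := ⨅ i : ℕ, κ^[i] x with hldef
    have htend : Tendsto (fun i : ℕ => κ^[i] x) atTop (nhds l) :=
      tendsto_atTop_ciInf hanti.antitone hbdd
    have hlb : b ≤ l := le_ciInf fun i => (hgt i).le
    have hlx : l < x := by
      have h1 : l ≤ κ^[1] x := ciInf_le hbdd 1
      have h2 : κ^[1] x < κ^[0] x := hdec 0
      simp only [Function.iterate_one, Function.iterate_zero, id_eq] at h1 h2
      linarith
    have hlint : l ∈ interior I := hopen l x hx (hb_gt.trans_le hlb) hlx.le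
    have hκl : Tendsto (fun i : ℕ => κ (κ^[i] x)) atTop (nhds (κ l)) := by
      apply (hκcont l (interior_subset hlint)).tendsto.comp
      exact tendsto_nhdsWithin_of_tendsto_nhds_of_eventually_within _ htend
        (Eventually.of_forall hxI)
    have hκl2 : Tendsto (fun i : ℕ => κ (κ^[i] x)) atTop (nhds l) := by
      have := htend.comp (tendsto_add_atTop_nat 1)
      apply this.congr
      intro i
      exact (Function.iterate_succ_apply' κ i x).symm ▸ rfl
    exact hnofix l hlint (tendsto_nhds_unique hκl hκl2)
  obtain ⟨N, hN⟩ := hreach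
  -- Lipschitz bound for q on J
  obtain ⟨M, hM⟩ := isCompact_Icc.exists_bound_of_continuousOn (hq_deriv_cont.mono hJI)
  have hM0 : 0 ≤ M := le_trans (norm_nonneg _) (hM s (left_mem_Icc.mpr hb_gt.le))
  have hqlip : ∀ y ∈ Icc s b, |q y - q s| ≤ M * (y - s) := by
    intro y hy
    have := Convex.norm_image_sub_le_of_norm_hasDerivWithin_le
      (fun z hz => (hq_deriv z (hJI hz)).mono hJI) hM hJconv (left_mem_Icc.mpr hb_gt.le) hy
    have h' : |y - s| = y - s := abs_of_nonneg (by linarith [hy.1])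
    rw [Real.norm_eq_abs, Real.norm_eq_abs, h'] at this
    exact this
  obtain ⟨B, hB⟩ := hq_bdd
  have hqs := hq_pos s hsI
  have hglob : ∀ i : ℕ, |q (κ^[i] x) - q s| ≤ B := by
    intro i
    have h1 := hB _ (hxI i)
    have h2 := hq_pos _ (hxI i)
    have h3 := hB s hsI
    rw [abs_le]
    constructor <;> linarith
  have hB0 : 0 < B := lt_of_lt_of_le hqs (hB s hsI)
  refine ⟨(M * (b - s) + B) / lam ^ N, lam, hlam0, hlam1, fun i => ?_⟩
  have hlamN : (0:ℝ) < lam ^ N := pow_pos hlam0 N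
  have hMb : 0 ≤ M * (b - s) := mul_nonneg hM0 (by linarith)
  rcases le_or_gt N i with h | h
  · obtain ⟨h1, h2⟩ := hiter _ hN (i - N)
    have hiN : κ^[i - N] (κ^[N] x) = κ^[i] x := by
      rw [← Function.iterate_add_apply]
      congr 1
      omega
    rw [hiN] at h1 h2
    have h3 := hqlip _ h1
    have h4 : κ^[i] x - s ≤ lam ^ (i - N) * (b - s) := by
      have : κ^[N] x - s ≤ b - s := by linarith [hN.2]
      calc κ^[i] x - s ≤ lam ^ (i - N) * (κ^[N] x - s) := h2
        _ ≤ lam ^ (i - N) * (b - s) := mul_le_mul_of_nonneg_left this (pow_nonneg hlam0.le _)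
    have h5 : lam ^ (i - N) = lam ^ i / lam ^ N := by
      rw [eq_div_iff hlamN.ne', ← pow_add]
      congr 1
      omega
    have h6 : (0:ℝ) ≤ lam ^ i / lam ^ N := by positivity
    calc |q (κ^[i] x) - q s| ≤ M * (κ^[i] x - s) := h3
      _ ≤ M * (lam ^ (i - N) * (b - s)) := mul_le_mul_of_nonneg_left h4 hM0
      _ = M * (b - s) * (lam ^ i / lam ^ N) := by rw [h5]; ring
      _ ≤ (M * (b - s) + B) * (lam ^ i / lam ^ N) :=
          mul_le_mul_of_nonneg_right (by linarith) h6
      _ = (M * (b - s) + B) / lam ^ N * lam ^ i := by ring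
  · have h1 : lam ^ N ≤ lam ^ i := pow_le_pow_of_le_one hlam0.le hlam1.le h.le
    have h2 : (1:ℝ) ≤ lam ^ i / lam ^ N := (one_le_div hlamN).mpr h1
    calc |q (κ^[i] x) - q s| ≤ B := hglob i
      _ = B * 1 := (mul_one B).symm
      _ ≤ (M * (b - s) + B) * (lam ^ i / lam ^ N) :=
          mul_le_mul (by linarith) h2 zero_le_one (by linarith)
      _ = (M * (b - s) + B) / lam ^ N * lam ^ i := by ring

/-- Iterates of the conjugated map under reflection. -/
lemma stmt10_iterate_neg_conj (κ : ℝ → ℝ) : ∀ (i : ℕ) (x : ℝ),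
    (fun z : ℝ => -κ (-z))^[i] (-x) = -(κ^[i] x) := by
  intro i
  induction i with
  | zero => intro x; simp
  | succ n ih =>
    intro x
    rw [Function.iterate_succ_apply', Function.iterate_succ_apply', ih x]
    simp

/-- Lemma: convergence of the infinite product
`∏_{i=m}^∞ q(κ^[i](x))/q(s)` to a positive real number. -/
theorem stmt_10
    (I : Set ℝ) (κ κ' q q' : ℝ → ℝ) (s : ℝ)
    -- I is a nondegenerate interval containing one of its endpoints s
    (hI : I.OrdConnected) (hsI : s ∈ I) (hnd : ∃ y ∈ I, y ≠ s)
    (hend : (∀ x ∈ I, s ≤ x) ∨ (∀ x ∈ I, x ≤ s))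
    -- κ : I → I is continuously differentiable and strictly increasing
    (hmaps : Set.MapsTo κ I I)
    (hderiv : ∀ x ∈ I, HasDerivWithinAt κ (κ' x) I x)
    (hderiv_cont : ContinuousOn κ' I)
    (hmono : StrictMonoOn κ I)
    -- κ(s) = s, κ'(s) < 1, and κ has no fixed point in the interior of I
    (hfix : κ s = s)
    (hslope : κ' s < 1)
    (hnofix : ∀ x ∈ interior I, κ x ≠ x)
    -- q : I → (0,∞) is positive, bounded, continuously differentiable, q'(s) ≠ 0
    (hq_pos : ∀ x ∈ I, 0 < q x)
    (hq_bdd : ∃ B, ∀ x ∈ I, q x ≤ B)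
    (hq_deriv : ∀ x ∈ I, HasDerivWithinAt q (q' x) I x)
    (hq_deriv_cont : ContinuousOn q' I)
    (hq's : q' s ≠ 0) :
    ∀ m : ℕ, ∀ x ∈ insert s (interior I), ∃ L : ℝ, 0 < L ∧
      Filter.Tendsto (fun t : ℕ => ∏ i ∈ Finset.Icc m t, q (κ^[i] x) / q s)
        Filter.atTop (nhds L) := by
  intro m x hx
  have hxI : x ∈ I := by
    rcases hx with rfl | hx
    · exact hsI
    · exact interior_subset hx
  have hapos : ∀ i : ℕ, 0 < q (κ^[i] x) := fun i => hq_pos _ (hmaps.iterate i hxI)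
  have hqs : 0 < q s := hq_pos s hsI
  -- It suffices to establish the geometric bound
  suffices hgeo : ∃ C lam : ℝ, 0 < lam ∧ lam < 1 ∧
      ∀ i : ℕ, |q (κ^[i] x) - q s| ≤ C * lam ^ i by
    obtain ⟨C, lam, h0, h1, hbd⟩ := hgeo
    exact stmt10_prod_tendsto (fun i => q (κ^[i] x)) (q s) C lam hqs hapos h0 h1 hbd m
  rcases hend with hl | hr
  · -- s is the left endpoint
    exact stmt10_geom_bound_left I κ κ' q q' s hI hsI hnd hl hmaps hderiv hderiv_cont
      hfix hslope hnofix hq_pos hq_bdd hq_deriv hq_deriv_cont x hx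
  · -- s is the right endpoint: conjugate with the reflection z ↦ -z
    set In : Set ℝ := Neg.neg ⁻¹' I with hIndef
    have hInord : In.OrdConnected := by
      refine ⟨fun a ha b hb => fun z hz => ?_⟩
      exact hI.out hb ha ⟨neg_le_neg hz.2, neg_le_neg hz.1⟩
    have hsIn : -s ∈ In := by simp [hIndef, hsI]
    obtain ⟨y0, hy0I, hy0ne⟩ := hnd
    have hndn : ∃ y ∈ In, y ≠ -s := ⟨-y0, by simp [hIndef, hy0I], by simpa using hy0ne⟩
    have hln : ∀ z ∈ In, -s ≤ z := fun z hz => by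
      have := hr (-z) hz
      linarith
    have hmapsneg : Set.MapsTo (fun z : ℝ => -z) In I := fun z hz => hz
    have hmapsn : Set.MapsTo (fun z : ℝ => -κ (-z)) In In := by
      intro z hz
      show -(-κ (-z)) ∈ I
      rw [neg_neg]
      exact hmaps hz
    have hnegderiv : ∀ z : ℝ, HasDerivWithinAt (fun w : ℝ => -w) (-1) In z :=
      fun z => (hasDerivAt_neg z).hasDerivWithinAt
    have hderivn : ∀ z ∈ In, HasDerivWithinAt (fun w : ℝ => -κ (-w)) ((fun w => κ' (-w)) z) In z := by
      intro z hz
      have h2 := HasDerivWithinAt.comp z (hderiv (-z) hz) (hnegderiv z) hmapsneg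
      have h3 := h2.neg
      simp only [mul_neg, mul_one, neg_neg] at h3
      exact h3
    have hderiv_contn : ContinuousOn (fun z : ℝ => κ' (-z)) In :=
      hderiv_cont.comp continuous_neg.continuousOn hmapsneg
    have hfixn : (fun z : ℝ => -κ (-z)) (-s) = -s := by simp [hfix]
    have hslopen : (fun z : ℝ => κ' (-z)) (-s) < 1 := by simpa using hslope
    have hintn : interior In = Neg.neg ⁻¹' interior I := by
      rw [hIndef]
      exact ((Homeomorph.neg ℝ).preimage_interior I).symm
    have hnofixn : ∀ z ∈ interior In, (fun w : ℝ => -κ (-w)) z ≠ z := by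
      intro z hz heq
      rw [hintn] at hz
      exact hnofix (-z) hz (by dsimp at heq; linarith)
    have hq_posn : ∀ z ∈ In, 0 < q (-z) := fun z hz => hq_pos (-z) hz
    have hq_bddn : ∃ B, ∀ z ∈ In, q (-z) ≤ B := by
      obtain ⟨B, hB⟩ := hq_bdd
      exact ⟨B, fun z hz => hB (-z) hz⟩
    have hq_derivn : ∀ z ∈ In, HasDerivWithinAt (fun w : ℝ => q (-w)) ((fun w => -q' (-w)) z) In z := by
      intro z hz
      have h2 := HasDerivWithinAt.comp z (hq_deriv (-z) hz) (hnegderiv z) hmapsneg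
      have h3 := h2
      simp only [mul_neg, mul_one] at h3
      exact h3
    have hq_deriv_contn : ContinuousOn (fun z : ℝ => -q' (-z)) In :=
      (hq_deriv_cont.comp continuous_neg.continuousOn hmapsneg).neg
    have hxn : -x ∈ insert (-s) (interior In) := by
      rcases hx with rfl | hx
      · exact mem_insert _ _
      · refine mem_insert_of_mem _ ?_
        rw [hintn]
        simpa using hx
    obtain ⟨C, lam, h0, h1, hbd⟩ := stmt10_geom_bound_left In (fun z => -κ (-z))
      (fun z => κ' (-z)) (fun z => q (-z)) (fun z => -q' (-z)) (-s)
      hInord hsIn hndn hln hmapsn hderivn hderiv_contn hfixn hslopen hnofixn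
      hq_posn hq_bddn hq_derivn hq_deriv_contn (-x) hxn
    refine ⟨C, lam, h0, h1, fun i => ?_⟩
    have := hbd i
    rw [stmt10_iterate_neg_conj κ i x] at this
    simpa using this
end

section
/- Let I ⊆ ℝ be a nondegenerate interval containing one of its endpoints s, and let κ : I → I be continuously differentiable and strictly increasing with κ(s) = s, κ'(s) < 1, and κ(x) ≠ x for every x in the interior of I. Let q : I → (0,∞) be positive, bounded, and continuously differentiable with q'(s) ≠ 0, such that q has limits at both endpoints of I and is endpoint maximal at s in I. Then for every integer m ≥ 1, the quantity D_m := sup_{x ∈ I} sup_{t ≥ m} ∏_{i=m}^t q(κ^{[i]}(x))/q(s) satisfies 1 ≤ D_m < ∞. -/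
open Set Filter
open scoped Classical

/-- The filter of approach to the lower endpoint of a set `A ⊆ ℝ` from within `A`. -/
noncomputable def leftEndFilter (A : Set ℝ) : Filter ℝ :=
  if BddBelow A then nhdsWithin (sInf A) (A \ {sInf A})
  else Filter.atBot ⊓ Filter.principal A

/-- The filter of approach to the upper endpoint of a set `A ⊆ ℝ` from within `A`. -/
noncomputable def rightEndFilter (A : Set ℝ) : Filter ℝ :=
  if BddAbove A then nhdsWithin (sSup A) (A \ {sSup A})
  else Filter.atTop ⊓ Filter.principal A

/-- `μ` is endpoint maximal at the endpoint `s` of the interval `A`: it has limits at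
both endpoints of `A` and the limit at `s` is strictly larger than the limit at the
other endpoint. -/
noncomputable def EndpointMaximalAt (μ : ℝ → ℝ) (A : Set ℝ) (s : ℝ) : Prop :=
  ∃ L L' : ℝ, L' < L ∧
    (((∀ x ∈ A, s ≤ x) ∧ Filter.Tendsto μ (leftEndFilter A) (nhds L) ∧
        Filter.Tendsto μ (rightEndFilter A) (nhds L')) ∨
     ((∀ x ∈ A, x ≤ s) ∧ Filter.Tendsto μ (rightEndFilter A) (nhds L) ∧
        Filter.Tendsto μ (leftEndFilter A) (nhds L')))

lemma tele_sum (f : ℕ → ℝ) (m t : ℕ) (h : m ≤ t) :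
    ∑ i ∈ Finset.Icc m t, (f i - f (i+1)) = f m - f (t+1) := by
  induction t, h using Nat.le_induction with
  | base => simp
  | succ t ht ih =>
      rw [Finset.sum_Icc_succ_top (by omega), ih]
      ring

set_option maxHeartbeats 1000000 in
lemma aux_main (I : Set ℝ) (κ κ' q q' : ℝ → ℝ) (s : ℝ)
    (hsI : s ∈ I)
    (h2 : ∀ x ∈ I, s ≤ x)
    (hmaps : Set.MapsTo κ I I)
    (hderiv : ∀ x ∈ I, HasDerivWithinAt κ (κ' x) I x)
    (hderiv_cont : ContinuousOn κ' I)
    (hfix : κ s = s)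
    (hk0 : 0 ≤ κ' s)
    (hslope : κ' s < 1)
    (hnofix : ∀ x ∈ interior I, κ x ≠ x)
    (hq_pos : ∀ x ∈ I, 0 < q x)
    (hq_bdd : ∃ B, ∀ x ∈ I, q x ≤ B)
    (hq_deriv : ∀ x ∈ I, HasDerivWithinAt q (q' x) I x)
    (hq_deriv_cont : ContinuousOn q' I)
    (M : ℝ) (hMs : s < M) (hMI : Set.Icc s M ⊆ I)
    (hMint : Set.Ioc s M ⊆ interior I)
    (hMfar : ∀ x ∈ I, M < x → q x ≤ q s) :
    ∃ D : ℝ, 1 ≤ D ∧ ∀ x ∈ I, ∀ m t : ℕ, m ≤ t →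
      (∏ i ∈ Finset.Icc m t, q (κ^[i] x) / q s) ≤ D := by
  have hqs : 0 < q s := hq_pos s hsI
  set lam : ℝ := (κ' s + 1) / 2 with hlam_def
  have hlam_pos : 0 < lam := by simp only [hlam_def]; linarith
  have hlam_lt : lam < 1 := by simp only [hlam_def]; linarith
  have hks_lt : κ' s < lam := by simp only [hlam_def]; linarith
  -- choose η near s where κ' ≤ lam and |q'| ≤ C
  obtain ⟨δ₁, hδ₁pos, hδ₁⟩ := Metric.continuousWithinAt_iff.mp (hderiv_cont s hsI)
    (lam - κ' s) (by linarith)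
  obtain ⟨δ₂, hδ₂pos, hδ₂⟩ := Metric.continuousWithinAt_iff.mp (hq_deriv_cont s hsI)
    1 one_pos
  set η : ℝ := min (min δ₁ δ₂ / 2) (M - s) with hη_def
  have hδmin : (0:ℝ) < min δ₁ δ₂ := lt_min hδ₁pos hδ₂pos
  have hηpos : 0 < η := lt_min (by positivity) (by linarith)
  have hηM : η ≤ M - s := min_le_right _ _
  have hηδ : η < min δ₁ δ₂ := lt_of_le_of_lt (min_le_left _ _) (by linarith)
  set S : Set ℝ := Icc s (s + η) with hS_def
  have hSsub : S ⊆ I := fun z hz => hMI ⟨hz.1, by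
    have h1 := hz.2; linarith⟩
  have hSball : ∀ z ∈ S, dist z s < min δ₁ δ₂ := by
    intro z hz
    obtain ⟨hz1, hz2⟩ := hz
    rw [Real.dist_eq, abs_of_nonneg (by linarith)]
    linarith
  set C : ℝ := |q' s| + 1 with hC_def
  have hCpos : 0 < C := by positivity
  have hkbound : ∀ z ∈ S, ‖κ' z‖ ≤ lam := by
    intro z hz
    have hzI := hSsub hz
    have h1 := abs_lt.mp (by
      rw [← Real.dist_eq]
      exact hδ₁ hzI (lt_of_lt_of_le (hSball z hz) (min_le_left _ _)))
    rw [Real.norm_eq_abs, abs_le]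
    constructor <;> linarith [h1.1, h1.2]
  have hqbound : ∀ z ∈ S, ‖q' z‖ ≤ C := by
    intro z hz
    have hzI := hSsub hz
    have h1 : |q' z - q' s| < 1 := by
      rw [← Real.dist_eq]
      exact hδ₂ hzI (lt_of_lt_of_le (hSball z hz) (min_le_right _ _))
    have h2 := abs_sub_abs_le_abs_sub (q' z) (q' s)
    rw [Real.norm_eq_abs, hC_def]
    linarith
  -- MVT bounds on S
  have hconvS : Convex ℝ S := convex_Icc _ _
  have hsS : s ∈ S := ⟨le_refl _, by linarith⟩
  have hcontr : ∀ x ∈ S, |κ x - s| ≤ lam * (x - s) := by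
    intro x hx
    have h1 := Convex.norm_image_sub_le_of_norm_hasDerivWithin_le
      (f := κ) (f' := κ') (s := S) (C := lam)
      (fun z hz => (hderiv z (hSsub hz)).mono hSsub) hkbound hconvS hsS hx
    rw [hfix, Real.norm_eq_abs, Real.norm_eq_abs,
      abs_of_nonneg (by linarith [hx.1] : (0:ℝ) ≤ x - s)] at h1
    exact h1
  have hqlip : ∀ x ∈ S, |q x - q s| ≤ C * (x - s) := by
    intro x hx
    have h1 := Convex.norm_image_sub_le_of_norm_hasDerivWithin_le
      (f := q) (f' := q') (s := S) (C := C)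
      (fun z hz => (hq_deriv z (hSsub hz)).mono hSsub) hqbound hconvS hsS hx
    rw [Real.norm_eq_abs, Real.norm_eq_abs,
      abs_of_nonneg (by linarith [hx.1] : (0:ℝ) ≤ x - s)] at h1
    exact h1
  -- no fixed points: κ x < x on Ioc s M
  have hcontκ : ContinuousOn κ I := fun x hx => (hderiv x hx).continuousWithinAt
  have hIocI : Ioc s M ⊆ I := fun z hz => hMI ⟨le_of_lt hz.1, hz.2⟩
  have hkx_lt : ∀ x ∈ Ioc s M, κ x < x := by
    intro x hx
    by_contra hcon
    push_neg at hcon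
    have hne := hnofix x (hMint hx)
    have hgt : x < κ x := lt_of_le_of_ne hcon (Ne.symm hne)
    have hev : ∀ᶠ y in nhdsWithin s (I \ {s}), slope κ s y < 1 :=
      (hasDerivWithinAt_iff_tendsto_slope.mp (hderiv s hsI)).eventually_lt_const hslope
    have hsub : Ioo s x ⊆ I \ {s} := fun z hz =>
      ⟨hIocI ⟨hz.1, le_of_lt (lt_of_lt_of_le hz.2 hx.2)⟩, ne_of_gt hz.1⟩
    have hne2 : (nhdsWithin s (Ioo s x)).NeBot := by
      rw [← mem_closure_iff_nhdsWithin_neBot, closure_Ioo (ne_of_lt hx.1)]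
      exact ⟨le_refl _, le_of_lt hx.1⟩
    have hev' : ∀ᶠ y in nhdsWithin s (Ioo s x), slope κ s y < 1 :=
      hev.filter_mono (nhdsWithin_mono s hsub)
    obtain ⟨y, hy1, hy2⟩ := (hev'.and (eventually_mem_nhdsWithin (s := Ioo s x))).exists
    have hys : s < y := hy2.1
    have hyx : y < x := hy2.2
    have hκy : κ y < y := by
      rw [slope_def_field, hfix, div_lt_one (by linarith : (0:ℝ) < y - s)] at hy1
      linarith
    -- IVT
    have hsubI : Icc y x ⊆ I := fun z hz =>
      hIocI ⟨lt_of_lt_of_le hys hz.1, le_trans hz.2 hx.2⟩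
    have hcf : ContinuousOn (fun z => κ z - z) (Icc y x) :=
      (hcontκ.mono hsubI).sub continuousOn_id
    have h0 : (0:ℝ) ∈ Icc (κ y - y) (κ x - x) := ⟨by linarith, by linarith⟩
    obtain ⟨z, hz, hz0⟩ := intermediate_value_Icc (le_of_lt hyx) hcf h0
    have hzint : z ∈ Ioc s M :=
      ⟨lt_of_lt_of_le hys hz.1, le_trans hz.2 hx.2⟩
    have hz0' : κ z - z = 0 := hz0
    exact hnofix z (hMint hzint) (by linarith)
  -- mid region minimum displacement
  set K : Set ℝ := Icc (s + η) M with hK_def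
  have hKsub : K ⊆ Ioc s M := fun z hz => ⟨lt_of_lt_of_le (by linarith) hz.1, hz.2⟩
  have hKI : K ⊆ I := fun z hz => hIocI (hKsub hz)
  have hKne : K.Nonempty := ⟨s + η, le_refl _, by linarith⟩
  obtain ⟨z₀, hz₀K, hz₀min⟩ := (isCompact_Icc).exists_isMinOn hKne
    ((continuousOn_id.sub (hcontκ.mono hKI)) :
      ContinuousOn (fun z => z - κ z) K)
  set δ₀ : ℝ := z₀ - κ z₀ with hδ₀_def
  have hδ₀pos : 0 < δ₀ := by
    have := hkx_lt z₀ (hKsub hz₀K)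
    simp only [hδ₀_def]; linarith
  have hmid : ∀ x ∈ K, δ₀ ≤ x - κ x := fun x hx => isMinOn_iff.mp hz₀min x hx
  -- constants
  obtain ⟨B, hB⟩ := hq_bdd
  set Qg : ℝ := max (B / q s) 1 with hQg_def
  have hQg1 : 1 ≤ Qg := le_max_right _ _
  have hQgpos : 0 < Qg := lt_of_lt_of_le one_pos hQg1
  set α : ℝ := max (C / (q s * (1 - lam))) (Real.log Qg / δ₀) with hα_def
  have hα0 : 0 ≤ α := le_trans
    (div_nonneg (le_of_lt hCpos) (by nlinarith)) (le_max_left _ _)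
  have hα1 : C / q s ≤ α * (1 - lam) := by
    have h1 : C / (q s * (1 - lam)) ≤ α := le_max_left _ _
    rw [div_le_iff₀ (by nlinarith : (0:ℝ) < q s * (1 - lam))] at h1
    rw [div_le_iff₀ hqs]
    nlinarith
  have hα2 : Real.log Qg ≤ α * δ₀ := by
    have h1 : Real.log Qg / δ₀ ≤ α := le_max_right _ _
    rw [div_le_iff₀ hδ₀pos] at h1
    linarith
  -- potential function
  set h : ℝ → ℝ := fun y => α * (max (min y M) s - s) with hh_def
  have hh0 : ∀ y, 0 ≤ h y := fun y =>
    mul_nonneg hα0 (by simp only [sub_nonneg]; exact le_max_right _ _)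
  have hhtop : ∀ y, h y ≤ α * (M - s) := fun y =>
    mul_le_mul_of_nonneg_left (by
      have : max (min y M) s ≤ M := max_le (min_le_right _ _) (le_of_lt hMs)
      linarith) hα0
  have hheq : ∀ y, s ≤ y → y ≤ M → h y = α * (y - s) := by
    intro y h1 h2
    simp only [hh_def, min_eq_left h2, max_eq_left h1]
  -- key pointwise inequality
  have key : ∀ x ∈ I, q x / q s ≤ Real.exp (h x - h (κ x)) := by
    intro x hxI
    have hsx := h2 x hxI
    have hκI := hmaps hxI
    have hsκ := h2 _ hκI
    rcases le_or_gt x (s + η) with hc1 | hc1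
    · -- near region
      have hxS : x ∈ S := ⟨hsx, hc1⟩
      have hcon := le_of_abs_le (hcontr x hxS)
      have hxM : x ≤ M := by linarith
      have hκx_le : κ x ≤ x := by nlinarith [hlam_lt, (by linarith : (0:ℝ) ≤ x - s)]
      have hκM : κ x ≤ M := le_trans hκx_le hxM
      rw [hheq x hsx hxM, hheq (κ x) hsκ hκM]
      have hq1 : q x ≤ q s + C * (x - s) := by linarith [le_of_abs_le (hqlip x hxS)]
      have hdiv : q x / q s ≤ 1 + (C / q s) * (x - s) := by
        rw [div_le_iff₀ hqs]
        have he : (1 + C / q s * (x - s)) * q s = q s + C * (x - s) := by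
          field_simp
        rw [he]
        exact hq1
      refine le_trans hdiv (le_trans (by
        have := Real.add_one_le_exp ((C / q s) * (x - s))
        linarith) (Real.exp_le_exp.mpr ?_))
      have hstep : C / q s * (x - s) ≤ α * (1 - lam) * (x - s) :=
        mul_le_mul_of_nonneg_right hα1 (by linarith)
      nlinarith [hα0, hcon, (by linarith : (0:ℝ) ≤ x - s)]
    · rcases le_or_gt x M with hc2 | hc2
      · -- mid region
        have hxK : x ∈ K := ⟨le_of_lt hc1, hc2⟩
        have hstep := hmid x hxK
        have hκM : κ x ≤ M := by linarith
        rw [hheq x hsx hc2, hheq (κ x) hsκ hκM]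
        have hq1 : q x / q s ≤ Qg :=
          le_trans ((div_le_div_iff_of_pos_right hqs).mpr (hB x hxI)) (le_max_left _ _)
        have hlog : Qg ≤ Real.exp (α * (x - s) - α * (κ x - s)) := by
          rw [← Real.exp_log hQgpos]
          apply Real.exp_le_exp.mpr
          have hst : α * δ₀ ≤ α * (x - κ x) := mul_le_mul_of_nonneg_left hstep hα0
          nlinarith
        exact le_trans hq1 hlog
      · -- far region
        have hq1 : q x ≤ q s := hMfar x hxI (by linarith)
        have hd : q x / q s ≤ 1 := by rw [div_le_one hqs]; exact hq1
        refine le_trans hd ?_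
        rw [show (1:ℝ) = Real.exp 0 from (Real.exp_zero).symm]
        apply Real.exp_le_exp.mpr
        have hx_top : h x = α * (M - s) := by
          simp only [hh_def, min_eq_right (le_of_lt hc2),
            max_eq_left (le_of_lt hMs)]
        rw [hx_top]
        linarith [hhtop (κ x)]
  -- conclusion
  refine ⟨Real.exp (α * (M - s)), Real.one_le_exp (by nlinarith), ?_⟩
  intro x hxI m t hmt
  have horb : ∀ i : ℕ, κ^[i] x ∈ I := fun i => (hmaps.iterate i) hxI
  have hterm : ∀ i ∈ Finset.Icc m t,
      q (κ^[i] x) / q s ≤ Real.exp (h (κ^[i] x) - h (κ^[i+1] x)) := by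
    intro i _
    rw [Function.iterate_succ_apply' κ i x]
    exact key _ (horb i)
  calc ∏ i ∈ Finset.Icc m t, q (κ^[i] x) / q s
      ≤ ∏ i ∈ Finset.Icc m t, Real.exp (h (κ^[i] x) - h (κ^[i+1] x)) :=
        Finset.prod_le_prod
          (fun i _ => div_nonneg (le_of_lt (hq_pos _ (horb i))) (le_of_lt hqs))
          hterm
    _ = Real.exp (∑ i ∈ Finset.Icc m t, (h (κ^[i] x) - h (κ^[i+1] x))) :=
        (Real.exp_sum _ _).symm
    _ = Real.exp (h (κ^[m] x) - h (κ^[t+1] x)) := by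
        rw [tele_sum (fun i => h (κ^[i] x)) m t hmt]
    _ ≤ Real.exp (α * (M - s)) := by
        apply Real.exp_le_exp.mpr
        linarith [hhtop (κ^[m] x), hh0 (κ^[t+1] x)]

lemma neg_interior_aux {A : Set ℝ} {x : ℝ} (h : -x ∈ interior A) :
    x ∈ interior ((fun y : ℝ => -y) ⁻¹' A) := by
  rw [mem_interior] at h ⊢
  obtain ⟨t, hts, hto, hxt⟩ := h
  exact ⟨(fun y : ℝ => -y) ⁻¹' t, fun y hy => hts hy,
    hto.preimage continuous_neg, by simpa using hxt⟩

set_option maxHeartbeats 1000000 in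
set_option maxHeartbeats 1000000 in
/-- Lemma: the supremum `D_m` of the partial products is finite and
at least 1. -/
theorem stmt_11
    (I : Set ℝ) (κ κ' q q' : ℝ → ℝ) (s : ℝ)
    -- I is a nondegenerate interval containing one of its endpoints s
    (hI : I.OrdConnected) (hsI : s ∈ I) (hnd : ∃ y ∈ I, y ≠ s)
    (hend : (∀ x ∈ I, s ≤ x) ∨ (∀ x ∈ I, x ≤ s))
    -- κ : I → I is continuously differentiable and strictly increasing
    (hmaps : Set.MapsTo κ I I)
    (hderiv : ∀ x ∈ I, HasDerivWithinAt κ (κ' x) I x)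
    (hderiv_cont : ContinuousOn κ' I)
    (hmono : StrictMonoOn κ I)
    -- κ(s) = s, κ'(s) < 1, and κ has no fixed point in the interior of I
    (hfix : κ s = s)
    (hslope : κ' s < 1)
    (hnofix : ∀ x ∈ interior I, κ x ≠ x)
    -- q : I → (0,∞) is positive, bounded, continuously differentiable, q'(s) ≠ 0
    (hq_pos : ∀ x ∈ I, 0 < q x)
    (hq_bdd : ∃ B, ∀ x ∈ I, q x ≤ B)
    (hq_deriv : ∀ x ∈ I, HasDerivWithinAt q (q' x) I x)
    (hq_deriv_cont : ContinuousOn q' I)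
    (hq's : q' s ≠ 0)
    -- q has limits at both endpoints of I and is endpoint maximal at s in I
    (hq_max : EndpointMaximalAt q I s) :
    ∀ m : ℕ, 1 ≤ m → ∃ D : ℝ, 1 ≤ D ∧
      ∀ x ∈ I, ∀ t : ℕ, m ≤ t →
        (∏ i ∈ Finset.Icc m t, q (κ^[i] x) / q s) ≤ D := by
  intro m _
  obtain ⟨y₀, hy₀I, hy₀ne⟩ := hnd
  -- the punctured neighborhood filter at s within I is nontrivial
  have hNB : (nhdsWithin s (I \ {s})).NeBot := by
    rw [← mem_closure_iff_nhdsWithin_neBot]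
    rcases lt_or_gt_of_ne hy₀ne with h | h
    · refine closure_mono
        (show Ico y₀ s ⊆ I \ {s} from fun z hz =>
          ⟨hI.out hy₀I hsI ⟨hz.1, le_of_lt hz.2⟩, ne_of_lt hz.2⟩) ?_
      rw [closure_Ico (ne_of_lt h)]
      exact ⟨le_of_lt h, le_refl _⟩
    · refine closure_mono
        (show Ioc s y₀ ⊆ I \ {s} from fun z hz =>
          ⟨hI.out hsI hy₀I ⟨le_of_lt hz.1, hz.2⟩, ne_of_gt hz.1⟩) ?_
      rw [closure_Ioc (ne_of_gt h).symm]
      exact ⟨le_refl _, le_of_lt h⟩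
  haveI := hNB
  -- the derivative of a strictly monotone function at s is nonnegative
  have hk0 : 0 ≤ κ' s := by
    have ht := hasDerivWithinAt_iff_tendsto_slope.mp (hderiv s hsI)
    refine ge_of_tendsto ht ?_
    filter_upwards [self_mem_nhdsWithin] with y hy
    obtain ⟨hyI, hyne⟩ := hy
    have hyne' : y ≠ s := hyne
    rw [slope_def_field]
    rcases lt_or_gt_of_ne hyne' with h | h
    · rw [show (κ y - κ s) / (y - s) = (κ s - κ y) / (s - y) by
        rw [← neg_div_neg_eq]; ring_nf]
      exact div_nonneg (by linarith [hmono hyI hsI h]) (by linarith)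
    · exact div_nonneg (by linarith [hmono hsI hyI h]) (by linarith)
  -- continuity of q within I at s
  have hqcont : Tendsto q (nhdsWithin s (I \ {s})) (nhds (q s)) :=
    ((hq_deriv s hsI).continuousWithinAt).mono_left (nhdsWithin_mono s diff_subset)
  rcases hend with hL | hR
  · -- s is the left endpoint
    obtain ⟨L, L', hLL', hcase⟩ := hq_max
    rcases hcase with ⟨_, hleft, hright⟩ | ⟨hle, _, _⟩
    swap
    · exact absurd (le_antisymm (hle y₀ hy₀I) (hL y₀ hy₀I)) hy₀ne
    have hbdd : BddBelow I := ⟨s, fun z hz => hL z hz⟩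
    have hinf : sInf I = s := le_antisymm (csInf_le hbdd hsI) (le_csInf ⟨s, hsI⟩ hL)
    rw [leftEndFilter, if_pos hbdd, hinf] at hleft
    have hLqs : L = q s := tendsto_nhds_unique hleft hqcont
    have hL'qs : L' < q s := hLqs ▸ hLL'
    have hsy : s < y₀ := lt_of_le_of_ne (hL y₀ hy₀I) (Ne.symm hy₀ne)
    obtain ⟨M, hMs, hMI, hMint, hMfar⟩ :
        ∃ M, s < M ∧ Icc s M ⊆ I ∧ Ioc s M ⊆ interior I ∧
          ∀ x ∈ I, M < x → q x ≤ q s := by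
      by_cases hba : BddAbove I
      · rw [rightEndFilter, if_pos hba] at hright
        set b := sSup I with hb
        have hsb : s < b := lt_of_lt_of_le hsy (le_csSup hba hy₀I)
        have hIoo : Ioo s b ⊆ I := by
          intro z hz
          obtain ⟨w, hwI, hzw⟩ := exists_lt_of_lt_csSup ⟨s, hsI⟩ hz.2
          exact hI.out hsI hwI ⟨le_of_lt hz.1, le_of_lt hzw⟩
        have hNBb : (nhdsWithin b (I \ {b})).NeBot := by
          rw [← mem_closure_iff_nhdsWithin_neBot]
          refine closure_mono
            (show Ioo s b ⊆ I \ {b} from fun z hz => ⟨hIoo hz, ne_of_lt hz.2⟩) ?_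
          rw [closure_Ioo (ne_of_lt hsb)]
          exact ⟨le_of_lt hsb, le_refl _⟩
        haveI := hNBb
        have hqb_le : b ∈ I → q b ≤ q s := by
          intro hbI
          have hc : Tendsto q (nhdsWithin b (I \ {b})) (nhds (q b)) :=
            ((hq_deriv b hbI).continuousWithinAt).mono_left
              (nhdsWithin_mono b diff_subset)
          have : q b = L' := tendsto_nhds_unique hc hright
          linarith
        have hev : ∀ᶠ x in nhdsWithin b (I \ {b}), q x < q s :=
          hright.eventually_lt_const hL'qs
        obtain ⟨ε, hεpos, hε⟩ := Metric.mem_nhdsWithin_iff.mp hev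
        have hMlt : max (b - ε/2) ((s+b)/2) < b := max_lt (by linarith) (by linarith)
        refine ⟨max (b - ε/2) ((s+b)/2),
          lt_of_lt_of_le (by linarith : s < (s+b)/2) (le_max_right _ _), ?_, ?_, ?_⟩
        · intro z hz
          rcases eq_or_lt_of_le hz.1 with he | hlt
          · rw [← he]; exact hsI
          · exact hIoo ⟨hlt, lt_of_le_of_lt hz.2 hMlt⟩
        · intro z hz
          exact interior_maximal hIoo isOpen_Ioo ⟨hz.1, lt_of_le_of_lt hz.2 hMlt⟩
        · intro x hxI hMx
          have hxb : x ≤ b := le_csSup hba hxI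
          rcases eq_or_lt_of_le hxb with he | hlt
          · rw [he]; exact hqb_le (he ▸ hxI)
          · refine le_of_lt (hε ⟨?_, hxI, ne_of_lt hlt⟩)
            rw [Metric.mem_ball, Real.dist_eq, abs_of_nonpos (by linarith)]
            have h1 : b - ε/2 ≤ max (b - ε/2) ((s+b)/2) := le_max_left _ _
            linarith
      · rw [rightEndFilter, if_neg hba] at hright
        have hev : ∀ᶠ x in atTop ⊓ 𝓟 I, q x < q s :=
          hright.eventually_lt_const hL'qs
        rw [eventually_inf_principal] at hev
        obtain ⟨M₁, hM₁⟩ := eventually_atTop.mp hev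
        have hup : ∀ z, s ≤ z → z ∈ I := by
          intro z hz
          obtain ⟨w, hwI, hzw⟩ := not_bddAbove_iff.mp hba z
          exact hI.out hsI hwI ⟨hz, le_of_lt hzw⟩
        refine ⟨max M₁ (s+1),
          lt_of_lt_of_le (by linarith) (le_max_right _ _),
          fun z hz => hup z hz.1, ?_, ?_⟩
        · intro z hz
          exact interior_maximal (fun w hw => hup w (le_of_lt hw)) isOpen_Ioi hz.1
        · intro x hxI hMx
          exact le_of_lt
            (hM₁ x (le_of_lt (lt_of_le_of_lt (le_max_left _ _) hMx)) hxI)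
    obtain ⟨D, hD1, hD⟩ := aux_main I κ κ' q q' s hsI hL hmaps hderiv hderiv_cont
      hfix hk0 hslope hnofix hq_pos hq_bdd hq_deriv hq_deriv_cont
      M hMs hMI hMint hMfar
    exact ⟨D, hD1, fun x hx t ht => hD x hx m t ht⟩
  · -- s is the right endpoint: mirror through negation
    obtain ⟨L, L', hLL', hcase⟩ := hq_max
    rcases hcase with ⟨hge, _, _⟩ | ⟨hle, hright, hleft⟩
    · exact absurd (le_antisymm (hR y₀ hy₀I) (hge y₀ hy₀I)) hy₀ne
    have hbdd : BddAbove I := ⟨s, fun z hz => hR z hz⟩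
    have hsup : sSup I = s := le_antisymm (csSup_le ⟨s, hsI⟩ hR) (le_csSup hbdd hsI)
    rw [rightEndFilter, if_pos hbdd, hsup] at hright
    have hLqs : L = q s := tendsto_nhds_unique hright hqcont
    have hL'qs : L' < q s := hLqs ▸ hLL'
    have hys : y₀ < s := lt_of_le_of_ne (hR y₀ hy₀I) hy₀ne
    obtain ⟨M₀, hM₀s, hM₀I, hM₀int, hM₀far⟩ :
        ∃ M₀, M₀ < s ∧ Icc M₀ s ⊆ I ∧ Ico M₀ s ⊆ interior I ∧
          ∀ x ∈ I, x < M₀ → q x ≤ q s := by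
      by_cases hbb : BddBelow I
      · rw [leftEndFilter, if_pos hbb] at hleft
        set a := sInf I with ha
        have has : a < s := lt_of_le_of_lt (csInf_le hbb hy₀I) hys
        have hIoo : Ioo a s ⊆ I := by
          intro z hz
          obtain ⟨w, hwI, hzw⟩ := exists_lt_of_csInf_lt ⟨s, hsI⟩ hz.1
          exact hI.out hwI hsI ⟨le_of_lt hzw, le_of_lt hz.2⟩
        have hNBa : (nhdsWithin a (I \ {a})).NeBot := by
          rw [← mem_closure_iff_nhdsWithin_neBot]
          refine closure_mono
            (show Ioo a s ⊆ I \ {a} from fun z hz => ⟨hIoo hz, ne_of_gt hz.1⟩) ?_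
          rw [closure_Ioo (ne_of_lt has)]
          exact ⟨le_refl _, le_of_lt has⟩
        haveI := hNBa
        have hqa_le : a ∈ I → q a ≤ q s := by
          intro haI
          have hc : Tendsto q (nhdsWithin a (I \ {a})) (nhds (q a)) :=
            ((hq_deriv a haI).continuousWithinAt).mono_left
              (nhdsWithin_mono a diff_subset)
          have : q a = L' := tendsto_nhds_unique hc hleft
          linarith
        have hev : ∀ᶠ x in nhdsWithin a (I \ {a}), q x < q s :=
          hleft.eventually_lt_const hL'qs
        obtain ⟨ε, hεpos, hε⟩ := Metric.mem_nhdsWithin_iff.mp hev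
        have hMgt : a < min (a + ε/2) ((s+a)/2) := lt_min (by linarith) (by linarith)
        refine ⟨min (a + ε/2) ((s+a)/2),
          lt_of_le_of_lt (min_le_right _ _) (by linarith : (s+a)/2 < s), ?_, ?_, ?_⟩
        · intro z hz
          rcases eq_or_lt_of_le hz.2 with he | hlt
          · rw [he]; exact hsI
          · exact hIoo ⟨lt_of_lt_of_le hMgt hz.1, hlt⟩
        · intro z hz
          exact interior_maximal hIoo isOpen_Ioo ⟨lt_of_lt_of_le hMgt hz.1, hz.2⟩
        · intro x hxI hMx
          have hax : a ≤ x := csInf_le hbb hxI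
          rcases eq_or_lt_of_le hax with he | hlt
          · rw [← he]; exact hqa_le (he ▸ hxI)
          · refine le_of_lt (hε ⟨?_, hxI, ne_of_gt hlt⟩)
            rw [Metric.mem_ball, Real.dist_eq, abs_of_nonneg (by linarith)]
            have h1 : min (a + ε/2) ((s+a)/2) ≤ a + ε/2 := min_le_left _ _
            linarith
      · rw [leftEndFilter, if_neg hbb] at hleft
        have hev : ∀ᶠ x in atBot ⊓ 𝓟 I, q x < q s :=
          hleft.eventually_lt_const hL'qs
        rw [eventually_inf_principal] at hev
        obtain ⟨M₁, hM₁⟩ := eventually_atBot.mp hev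
        have hdn : ∀ z, z ≤ s → z ∈ I := by
          intro z hz
          obtain ⟨w, hwI, hzw⟩ := not_bddBelow_iff.mp hbb z
          exact hI.out hwI hsI ⟨le_of_lt hzw, hz⟩
        refine ⟨min M₁ (s-1),
          lt_of_le_of_lt (min_le_right _ _) (by linarith),
          fun z hz => hdn z hz.2, ?_, ?_⟩
        · intro z hz
          exact interior_maximal (fun w hw => hdn w (le_of_lt hw)) isOpen_Iio hz.2
        · intro x hxI hMx
          exact le_of_lt
            (hM₁ x (le_of_lt (lt_of_lt_of_le hMx (min_le_left _ _))) hxI)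
    -- negated system
    set J : Set ℝ := (fun x : ℝ => -x) ⁻¹' I with hJ_def
    set κn : ℝ → ℝ := fun x => -κ (-x) with hκn_def
    set κn' : ℝ → ℝ := fun x => κ' (-x) with hκn'_def
    set qn : ℝ → ℝ := fun x => q (-x) with hqn_def
    set qn' : ℝ → ℝ := fun x => -q' (-x) with hqn'_def
    have hmemJ : ∀ x : ℝ, x ∈ J ↔ -x ∈ I := fun x => Iff.rfl
    have hJI : (fun x : ℝ => -x) ⁻¹' J = I := by
      ext z; simp [hJ_def]
    have hsJ : -s ∈ J := by rw [hmemJ]; simpa using hsI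
    have h2J : ∀ x ∈ J, -s ≤ x := by
      intro x hx
      have := hR (-x) hx
      linarith
    have hmapsJ : Set.MapsTo κn J J := by
      intro x hx
      rw [hmemJ]
      show -(-κ (-x)) ∈ I
      rw [neg_neg]
      exact hmaps hx
    have hderivJ : ∀ x ∈ J, HasDerivWithinAt κn (κn' x) J x := by
      intro x hx
      have h1 : HasDerivWithinAt (fun y : ℝ => -y) (-1) J x :=
        (hasDerivAt_neg x).hasDerivWithinAt
      have h3 := HasDerivWithinAt.comp x (hderiv (-x) hx) h1 (fun y hy => hy)
      have h4 := h3.neg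
      have he : -(κ' (-x) * -1) = κn' x := by
        simp only [hκn'_def]; ring
      rw [he] at h4
      exact h4
    have hderiv_contJ : ContinuousOn κn' J :=
      hderiv_cont.comp (continuous_neg.continuousOn) (fun y hy => hy)
    have hfixJ : κn (-s) = -s := by simp [hκn_def, hfix]
    have hk0J : 0 ≤ κn' (-s) := by simpa [hκn'_def] using hk0
    have hslopeJ : κn' (-s) < 1 := by simpa [hκn'_def] using hslope
    have hintJI : ∀ x, x ∈ interior J → -x ∈ interior I := by
      intro x hx
      have h1 : -(-x) ∈ interior J := by simpa using hx
      have := neg_interior_aux h1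
      rwa [hJI] at this
    have hnofixJ : ∀ x ∈ interior J, κn x ≠ x := by
      intro x hx hcon
      have h1 := hnofix (-x) (hintJI x hx)
      apply h1
      have : κ (-x) = -x := by
        have : -κ (-x) = x := hcon
        linarith
      exact this
    have hq_posJ : ∀ x ∈ J, 0 < qn x := fun x hx => hq_pos (-x) hx
    have hq_bddJ : ∃ B, ∀ x ∈ J, qn x ≤ B := by
      obtain ⟨B, hB⟩ := hq_bdd
      exact ⟨B, fun x hx => hB (-x) hx⟩
    have hq_derivJ : ∀ x ∈ J, HasDerivWithinAt qn (qn' x) J x := by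
      intro x hx
      have h1 : HasDerivWithinAt (fun y : ℝ => -y) (-1) J x :=
        (hasDerivAt_neg x).hasDerivWithinAt
      have h3 := HasDerivWithinAt.comp x (hq_deriv (-x) hx) h1 (fun y hy => hy)
      have he : q' (-x) * -1 = qn' x := by
        simp only [hqn'_def]; ring
      rw [he] at h3
      exact h3
    have hq_deriv_contJ : ContinuousOn qn' J :=
      (hq_deriv_cont.comp (continuous_neg.continuousOn) (fun y hy => hy)).neg
    have hMsJ : -s < -M₀ := by linarith
    have hMIJ : Icc (-s) (-M₀) ⊆ J := by
      intro z hz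
      rw [hmemJ]
      exact hM₀I ⟨by linarith [hz.2], by linarith [hz.1]⟩
    have hMintJ : Ioc (-s) (-M₀) ⊆ interior J := by
      intro z hz
      have h1 : -z ∈ Ico M₀ s := ⟨by linarith [hz.2], by linarith [hz.1]⟩
      have h2 := hM₀int h1
      have := neg_interior_aux (A := I) (x := z) h2
      exact this
    have hMfarJ : ∀ x ∈ J, -M₀ < x → qn x ≤ qn (-s) := by
      intro x hx hMx
      have h1 : -x < M₀ := by linarith
      have := hM₀far (-x) hx h1
      simpa [hqn_def] using this
    obtain ⟨D, hD1, hD⟩ := aux_main J κn κn' qn qn' (-s) hsJ h2J hmapsJ hderivJ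
      hderiv_contJ hfixJ hk0J hslopeJ hnofixJ hq_posJ hq_bddJ hq_derivJ
      hq_deriv_contJ (-M₀) hMsJ hMIJ hMintJ hMfarJ
    refine ⟨D, hD1, ?_⟩
    intro x hx t ht
    have hxJ : -x ∈ J := by rw [hmemJ]; simpa using hx
    have hiter : ∀ (i : ℕ), κn^[i] (-x) = -(κ^[i] x) := by
      intro i
      induction i with
      | zero => simp
      | succ n ih =>
          rw [Function.iterate_succ_apply', Function.iterate_succ_apply', ih]
          simp [hκn_def]
    have := hD (-x) hxJ m t ht
    have heq : (∏ i ∈ Finset.Icc m t, qn (κn^[i] (-x)) / qn (-s)) =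
        ∏ i ∈ Finset.Icc m t, q (κ^[i] x) / q s := by
      apply Finset.prod_congr rfl
      intro i _
      rw [hiter i]
      simp [hqn_def]
    rwa [heq] at this
end

section
/- Consider the relative-capital process on 𝒳 = [1,∞) with transmission function τ̂(x) = x^{α+β} and fertility function n̂(x) = c/x for constants α, β ∈ (0,1) and c > 0. Then: (a) the distribution degenerate at 1 is a steady state of the population process, i.e. if F(x) = 𝟙[1 ≤ x] then (1/∫ n̂ dF) ∫_𝒳 𝟙[τ̂(z) ≤ x] n̂(z) dF(z) = F(x) for all x ∈ 𝒳; (b) if α+β < 1 and the initial distribution admits a density f̂₀ that is continuous, bounded, and supported on [1,∞), then the process converges to the distribution degenerate at 1: lim_{t→∞} F̂_t(x) = 1 for every x > 1, where F̂_t(x) := ∫_{1}^{x} f̂_t(z) dz. -/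
open MeasureTheory Set Filter
open scoped Classical

lemma stmt17_image_Ici (p : ℝ) (hp : 0 < p) :
    (fun y : ℝ => y ^ p) '' Set.Ici 1 = Set.Ici 1 := by
  ext z
  constructor
  · rintro ⟨y, hy, rfl⟩
    exact Real.one_le_rpow hy hp.le
  · intro hz
    exact ⟨z ^ p⁻¹, Real.one_le_rpow hz (by positivity),
      Real.rpow_inv_rpow (le_trans zero_le_one hz) hp.ne'⟩

lemma stmt17_image_Icc (p b : ℝ) (hp : 0 < p) (hb : 1 ≤ b) :
    (fun y : ℝ => y ^ p) '' Set.Icc 1 (b ^ p⁻¹) = Set.Icc 1 b := by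
  ext z
  constructor
  · rintro ⟨y, ⟨hy1, hy2⟩, rfl⟩
    refine ⟨Real.one_le_rpow hy1 hp.le, ?_⟩
    calc y ^ p ≤ (b ^ p⁻¹) ^ p :=
          Real.rpow_le_rpow (le_trans zero_le_one hy1) hy2 hp.le
      _ = b := Real.rpow_inv_rpow (le_trans zero_le_one hb) hp.ne'
  · rintro ⟨hz1, hz2⟩
    refine ⟨z ^ p⁻¹, ⟨Real.one_le_rpow hz1 (by positivity),
      Real.rpow_le_rpow (le_trans zero_le_one hz1) hz2 (by positivity)⟩,
      Real.rpow_inv_rpow (le_trans zero_le_one hz1) hp.ne'⟩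

lemma stmt17_subst (p : ℝ) (hp : 0 < p) (s : Set ℝ) (hs : MeasurableSet s)
    (hs1 : s ⊆ Set.Ici 1) (g : ℝ → ℝ) :
    ∫ z in (fun y : ℝ => y ^ p) '' s, g z
      = ∫ y in s, (p * y ^ (p - 1)) * g (y ^ p) := by
  rw [integral_image_eq_integral_abs_deriv_smul hs
    (fun x hx => (Real.hasDerivAt_rpow_const
      (Or.inl (by have := hs1 hx; simp only [Set.mem_Ici] at this; linarith))).hasDerivWithinAt)
    (fun a ha b hb hab => Real.rpow_left_injOn hp.ne'
      (by have := hs1 ha; simp only [Set.mem_Ici] at this; simpa using by linarith)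
      (by have := hs1 hb; simp only [Set.mem_Ici] at this; simpa using by linarith) hab) g]
  refine setIntegral_congr_fun hs (fun y hy => ?_)
  have hy1 : (1:ℝ) ≤ y := hs1 hy
  have : 0 < p * y ^ (p - 1) := by positivity
  rw [abs_of_pos this, smul_eq_mul]


lemma stmt17_exp (g P S : ℝ) (hg : g ≠ 0) (hP : P ≠ 0) :
    g⁻¹ * (P⁻¹ * (1 - P - S))
      = (P * g)⁻¹ * (1 - P * g - (S + P)) + (g⁻¹ + g⁻¹ * (g - 1)) := by
  field_simp
  ring

lemma stmt17_alg (E u v g c C w G : ℝ) (hE : E ≠ 0) (hu : u ≠ 0) (hv : v ≠ 0)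
    (hg : g ≠ 0) :
    1 / E * ((c / u) / (g * v)) * (C * (w * (u * v)) * G)
      = C * (c / (E * g)) * w * G := by
  field_simp

lemma stmt17_alg2 (E g w y c F : ℝ) (hE : E ≠ 0) (hg : g ≠ 0) (hw : w ≠ 0)
    (hy : y ≠ 0) :
    g * w * (1 / E * (c / y / (g * w)) * F) = 1 / E * (c / y * F) := by
  field_simp

/-- (Theorem 2(ii): for the relative-capital process with
`τ̂(x) = x^{α+β}` and `n̂(x) = c/x` on `[1,∞)`, the distribution degenerate at 1 is a
steady state of the population process, and for `α+β < 1` the process converges to it). -/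
theorem stmt_17
    (α β c : ℝ) (f : ℕ → ℝ → ℝ)
    (hα : α ∈ Set.Ioo (0:ℝ) 1) (hβ : β ∈ Set.Ioo (0:ℝ) 1) (hc : 0 < c)
    -- f₀ is a probability density on 𝒳 = [1,∞)
    (hf0_nonneg : ∀ x, 0 ≤ f 0 x)
    (hf0_zero : ∀ x ∉ Set.Ici (1:ℝ), f 0 x = 0)
    (hf0_int : IntegrableOn (f 0) (Set.Ici (1:ℝ)))
    (hf0_one : (∫ x in Set.Ici (1:ℝ), f 0 x) = 1)
    -- (f_t) is the density process with n̂(x) = c/x, τ̂(x) = x^{α+β}, ρ̂(x) = x^{1/(α+β)}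
    (hrec : ∀ t, ∀ x ∈ Set.Ici (1:ℝ),
      f (t + 1) x
        = (1 / ∫ z in Set.Ici (1:ℝ), (c / z) * f t z)
            * ((c / x ^ (α + β)⁻¹) / ((α + β) * (x ^ (α + β)⁻¹) ^ (α + β - 1)))
            * f t (x ^ (α + β)⁻¹))
    (hrec_zero : ∀ t, ∀ x ∉ Set.Ici (1:ℝ), f (t + 1) x = 0)
    (hnf_int : ∀ t, IntegrableOn (fun z => (c / z) * f t z) (Set.Ici (1:ℝ)))
    (hE_pos : ∀ t, 0 < ∫ z in Set.Ici (1:ℝ), (c / z) * f t z) :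
    -- (a) the distribution degenerate at 1 (i.e. the Dirac mass at 1, whose CDF is
    -- F(x) = 𝟙[1 ≤ x]) is a steady state of the population process
    (∀ x ∈ Set.Ici (1:ℝ),
      (1 / ∫ z, c / z ∂(Measure.dirac (1:ℝ)))
          * (∫ z, (if z ^ (α + β) ≤ x then c / z else 0) ∂(Measure.dirac (1:ℝ)))
        = if (1:ℝ) ≤ x then 1 else 0) ∧
    -- (b) if α+β < 1 and f₀ is continuous, bounded, and supported on [1,∞), then the
    -- process converges to the distribution degenerate at 1
    ((α + β < 1 ∧ ContinuousOn (f 0) (Set.Ici (1:ℝ)) ∧ (∃ B, ∀ x, f 0 x ≤ B) ∧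
        closure {x | f 0 x ≠ 0} = Set.Ici (1:ℝ)) →
      ∀ x : ℝ, 1 < x →
        Filter.Tendsto (fun t => ∫ z in Set.Icc (1:ℝ) x, f t z)
          Filter.atTop (nhds 1)) := by
  constructor
  · -- part (a)
    intro x hx
    have hx1 : (1:ℝ) ≤ x := hx
    have h1 : (∫ z, c / z ∂(Measure.dirac (1:ℝ))) = c := by
      rw [integral_dirac]; norm_num
    have h2 : (∫ z, (if z ^ (α + β) ≤ x then c / z else 0) ∂(Measure.dirac (1:ℝ)))
        = if (1:ℝ) ^ (α + β) ≤ x then c / 1 else 0 := integral_dirac _ 1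
    rw [h1, h2, Real.one_rpow, if_pos hx1, if_pos hx1]
    field_simp
  · -- part (b)
    rintro ⟨hγ1, -, -, -⟩ x hx1
    set γ := α + β with hγdef
    have hγ0 : 0 < γ := add_pos hα.1 hβ.1
    have hγne : γ ≠ 0 := hγ0.ne'
    have hγt0 : ∀ t : ℕ, 0 < γ ^ t := fun t => pow_pos hγ0 t
    set s : ℕ → ℝ := fun t => ∑ k ∈ Finset.range t, γ ^ k with hsdef
    have hs_nonneg : ∀ t, 0 ≤ s t :=
      fun t => Finset.sum_nonneg fun k _ => (hγt0 k).le
    have hs_succ : ∀ t, s (t + 1) = s t + γ ^ t := fun t => Finset.sum_range_succ _ t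
    have hS0 : (0:ℝ) ≤ (1 - γ)⁻¹ := by
      have : (0:ℝ) < 1 - γ := by linarith
      positivity
    have hs_le : ∀ t, s t ≤ (1 - γ)⁻¹ := by
      intro t
      have h1γ : (0:ℝ) < 1 - γ := by linarith
      have h1 : s t = (1 - γ ^ t) / (1 - γ) := by
        rw [hsdef]
        simp only
        rw [geom_sum_eq (ne_of_lt hγ1) t]
        rw [← neg_div_neg_eq]
        ring_nf
      rw [h1, inv_eq_one_div]
      have ht0 : (0:ℝ) ≤ γ ^ t := (hγt0 t).le
      gcongr
      linarith
    -- pointwise formula for f t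
    have P : ∀ t, ∃ C : ℝ, 0 < C ∧ ∀ y ∈ Set.Ici (1:ℝ),
        f t y = C * y ^ (((γ ^ t)⁻¹ : ℝ) * (1 - γ ^ t - s t))
          * f 0 (y ^ ((γ ^ t)⁻¹ : ℝ)) := by
      intro t
      induction t with
      | zero =>
        refine ⟨1, one_pos, fun y hy => ?_⟩
        have : s 0 = 0 := by simp [hsdef]
        simp [this, Real.rpow_one]
      | succ t ih =>
        obtain ⟨C, hC, hCf⟩ := ih
        have hEt := hE_pos t
        refine ⟨C * (c / ((∫ z in Set.Ici (1:ℝ), (c / z) * f t z) * γ)),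
          by positivity, fun y hy => ?_⟩
        have hy1 : (1:ℝ) ≤ y := hy
        have hy0 : (0:ℝ) < y := lt_of_lt_of_le one_pos hy1
        have hu1 : (1:ℝ) ≤ y ^ (γ⁻¹ : ℝ) := Real.one_le_rpow hy1 (by positivity)
        rw [hrec t y hy, hCf _ hu1]
        have hγtne : (γ:ℝ) ^ t ≠ 0 := (hγt0 t).ne'
        have hγt1ne : (γ:ℝ) ^ (t+1) ≠ 0 := (hγt0 (t+1)).ne'
        have harg : (y ^ (γ⁻¹:ℝ)) ^ ((γ ^ t)⁻¹ : ℝ) = y ^ ((γ ^ (t+1))⁻¹ : ℝ) := by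
          rw [← Real.rpow_mul hy0.le]
          congr 1
          rw [pow_succ, mul_inv]
          ring
        rw [harg]
        have hb : (y ^ (γ⁻¹:ℝ)) ^ (((γ ^ t)⁻¹ : ℝ) * (1 - γ ^ t - s t))
            = y ^ ((γ⁻¹:ℝ) * (((γ ^ t)⁻¹ : ℝ) * (1 - γ ^ t - s t))) := by
          rw [← Real.rpow_mul hy0.le]
        have hgm : (y ^ (γ⁻¹:ℝ)) ^ (γ - 1) = y ^ ((γ⁻¹:ℝ) * (γ - 1)) := by
          rw [← Real.rpow_mul hy0.le]
        rw [hb, hgm]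
        have e1 : y ^ ((γ⁻¹:ℝ) * (((γ ^ t)⁻¹ : ℝ) * (1 - γ ^ t - s t)))
            = y ^ (((γ ^ (t+1))⁻¹ : ℝ) * (1 - γ ^ (t+1) - s (t+1)))
              * (y ^ (γ⁻¹:ℝ) * y ^ ((γ⁻¹:ℝ) * (γ - 1))) := by
          rw [← Real.rpow_add hy0, ← Real.rpow_add hy0]
          congr 1
          rw [hs_succ, pow_succ]
          exact stmt17_exp γ (γ ^ t) (s t) hγne hγtne
        rw [e1]
        exact stmt17_alg _ _ _ _ _ _ _ _ hEt.ne'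
          (ne_of_gt (Real.rpow_pos_of_pos hy0 _))
          (ne_of_gt (Real.rpow_pos_of_pos hy0 _)) hγne
    -- normalization
    have norm : ∀ t, (∫ z in Set.Ici (1:ℝ), f t z) = 1 := by
      intro t
      cases t with
      | zero => exact hf0_one
      | succ t =>
        have h := stmt17_subst γ hγ0 (Set.Ici 1) measurableSet_Ici subset_rfl (f (t+1))
        rw [stmt17_image_Ici γ hγ0] at h
        rw [h]
        have hcg : ∀ y ∈ Set.Ici (1:ℝ), (γ * y ^ (γ - 1)) * f (t+1) (y ^ γ)
            = (1 / ∫ z in Set.Ici (1:ℝ), (c / z) * f t z) * ((c / y) * f t y) := by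
          intro y hy
          have hy1 : (1:ℝ) ≤ y := hy
          have hy0 : (0:ℝ) < y := lt_of_lt_of_le one_pos hy1
          have hyg : (1:ℝ) ≤ y ^ γ := Real.one_le_rpow hy1 hγ0.le
          rw [hrec t _ hyg, Real.rpow_rpow_inv hy0.le hγne]
          exact stmt17_alg2 _ _ _ _ _ _ (hE_pos t).ne' hγne
            (ne_of_gt (Real.rpow_pos_of_pos hy0 _)) hy0.ne'
        rw [setIntegral_congr_fun measurableSet_Ici hcg, integral_const_mul _ _,
          one_div, inv_mul_cancel₀ (hE_pos t).ne']
    -- integrability of weighted densities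
    have hg_nonneg : ∀ r : ℝ, 0 ≤ r → ∀ y : ℝ, 0 ≤ y ^ (-r) * f 0 y := by
      intro r hr y
      rcases le_or_gt 1 y with hy | hy
      · exact mul_nonneg (Real.rpow_nonneg (by linarith) _) (hf0_nonneg y)
      · rw [hf0_zero y (by simp [Set.mem_Ici]; linarith), mul_zero]
    have hg_int : ∀ r : ℝ, 0 ≤ r →
        IntegrableOn (fun y : ℝ => y ^ (-r) * f 0 y) (Set.Ici 1) := by
      intro r hr
      refine Integrable.mono hf0_int
        (((measurable_id'.pow_const (-r)).aestronglyMeasurable).mul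
          hf0_int.aestronglyMeasurable) ?_
      rw [ae_restrict_iff' measurableSet_Ici]
      filter_upwards with y hy
      have hy1 : (1:ℝ) ≤ y := hy
      have h1 : y ^ (-r : ℝ) ≤ 1 :=
        Real.rpow_le_one_of_one_le_of_nonpos hy1 (neg_nonpos.mpr hr)
      have h0 : (0:ℝ) ≤ y ^ (-r : ℝ) := Real.rpow_nonneg (by linarith) _
      rw [Real.norm_eq_abs, Real.norm_eq_abs,
        abs_of_nonneg (mul_nonneg h0 (hf0_nonneg y)), abs_of_nonneg (hf0_nonneg y)]
      nlinarith [hf0_nonneg y]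
    -- main identity
    have key : ∀ t : ℕ, (0 < ∫ y in Set.Ici (1:ℝ), y ^ (-(s t)) * f 0 y) ∧
        ∀ b : ℝ, 1 ≤ b → (∫ z in Set.Icc (1:ℝ) b, f t z)
          = (∫ y in Set.Icc (1:ℝ) (b ^ ((γ ^ t)⁻¹ : ℝ)), y ^ (-(s t)) * f 0 y)
            / (∫ y in Set.Ici (1:ℝ), y ^ (-(s t)) * f 0 y) := by
      intro t
      obtain ⟨C, hC, hCf⟩ := P t
      have hp : 0 < γ ^ t := hγt0 t
      have hpne : (γ:ℝ) ^ t ≠ 0 := hp.ne'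
      have congr_fact : ∀ y ∈ Set.Ici (1:ℝ),
          ((γ ^ t) * y ^ ((γ ^ t) - 1)) * f t (y ^ (γ ^ t : ℝ))
            = (C * γ ^ t) * (y ^ (-(s t)) * f 0 y) := by
        intro y hy
        have hy1 : (1:ℝ) ≤ y := hy
        have hy0 : (0:ℝ) < y := lt_of_lt_of_le one_pos hy1
        have hyp1 : (1:ℝ) ≤ y ^ (γ ^ t : ℝ) := Real.one_le_rpow hy1 hp.le
        rw [hCf _ hyp1, Real.rpow_rpow_inv hy0.le hpne]
        have hb : (y ^ (γ ^ t : ℝ)) ^ (((γ ^ t)⁻¹ : ℝ) * (1 - γ ^ t - s t))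
            = y ^ ((1:ℝ) - γ ^ t - s t) := by
          rw [← Real.rpow_mul hy0.le, ← mul_assoc, mul_inv_cancel₀ hpne, one_mul]
        rw [hb]
        have hc2 : y ^ ((γ ^ t : ℝ) - 1) * y ^ ((1:ℝ) - γ ^ t - s t)
            = y ^ (-(s t) : ℝ) := by
          rw [← Real.rpow_add hy0]; ring_nf
        rw [← hc2]
        ring
      have hIcc : ∀ b : ℝ, 1 ≤ b → (∫ z in Set.Icc (1:ℝ) b, f t z)
          = (C * γ ^ t) * ∫ y in Set.Icc (1:ℝ) (b ^ ((γ ^ t)⁻¹ : ℝ)),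
              y ^ (-(s t)) * f 0 y := by
        intro b hb
        rw [← stmt17_image_Icc (γ ^ t) b hp hb,
          stmt17_subst (γ ^ t) hp _ measurableSet_Icc Set.Icc_subset_Ici_self,
          setIntegral_congr_fun measurableSet_Icc (fun y hy => congr_fact y hy.1),
          integral_const_mul _ _]
      have hIci : (∫ z in Set.Ici (1:ℝ), f t z)
          = (C * γ ^ t) * ∫ y in Set.Ici (1:ℝ), y ^ (-(s t)) * f 0 y := by
        have h := stmt17_subst (γ ^ t) hp (Set.Ici 1) measurableSet_Ici subset_rfl (f t)
        rw [stmt17_image_Ici (γ ^ t) hp] at h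
        rw [h, setIntegral_congr_fun measurableSet_Ici congr_fact,
          integral_const_mul _ _]
      have hD : (C * γ ^ t) * (∫ y in Set.Ici (1:ℝ), y ^ (-(s t)) * f 0 y) = 1 := by
        rw [← hIci, norm t]
      have hCp : 0 < C * γ ^ t := mul_pos hC hp
      have hDeq : (∫ y in Set.Ici (1:ℝ), y ^ (-(s t)) * f 0 y) = 1 / (C * γ ^ t) := by
        rw [eq_div_iff hCp.ne']
        linear_combination hD
      have hDpos : 0 < ∫ y in Set.Ici (1:ℝ), y ^ (-(s t)) * f 0 y := by
        rw [hDeq]; positivity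
      refine ⟨hDpos, fun b hb => ?_⟩
      rw [hIcc b hb, hDeq]
      rw [div_div_eq_mul_div, div_one]
      ring
    -- positivity of the limit denominator
    have hDinf_nonneg : (0:ℝ) ≤ ∫ y in Set.Ici (1:ℝ), y ^ (-(1 - γ)⁻¹) * f 0 y :=
      setIntegral_nonneg measurableSet_Ici fun y _ => hg_nonneg _ hS0 y
    have hDinf_pos : (0:ℝ) < ∫ y in Set.Ici (1:ℝ), y ^ (-(1 - γ)⁻¹) * f 0 y := by
      rcases hDinf_nonneg.lt_or_eq with h | h
      · exact h
      · exfalso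
        have hint := hg_int _ hS0
        have hzero := (integral_eq_zero_iff_of_nonneg_ae
          (Eventually.of_forall fun y => hg_nonneg _ hS0 y) hint).mp h.symm
        have hf0z : f 0 =ᵐ[volume.restrict (Set.Ici (1:ℝ))] 0 := by
          filter_upwards [hzero, ae_restrict_mem measurableSet_Ici] with y h1 h2
          have hy0 : (0:ℝ) < y := lt_of_lt_of_le one_pos h2
          have : y ^ (-(1 - γ)⁻¹ : ℝ) ≠ 0 := ne_of_gt (Real.rpow_pos_of_pos hy0 _)
          simpa [this] using h1
        have : (∫ y in Set.Ici (1:ℝ), f 0 y) = 0 := by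
          rw [integral_congr_ae hf0z]
          simp
        rw [hf0_one] at this
        exact one_ne_zero this
    -- the moving cutoff tends to infinity
    have hx0 : (0:ℝ) < x := by linarith
    have hX1 : ∀ t : ℕ, (1:ℝ) ≤ x ^ ((γ ^ t)⁻¹ : ℝ) :=
      fun t => Real.one_le_rpow hx1.le (by positivity)
    have hXtop : Tendsto (fun t : ℕ => x ^ ((γ ^ t)⁻¹ : ℝ)) atTop atTop := by
      have h1 : Tendsto (fun t : ℕ => ((γ ^ t)⁻¹ : ℝ)) atTop atTop := by
        apply Filter.Tendsto.inv_tendsto_nhdsGT_zero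
        exact tendsto_nhdsWithin_of_tendsto_nhds_of_eventually_within _
          (tendsto_pow_atTop_nhds_zero_of_lt_one hγ0.le hγ1)
          (Eventually.of_forall fun t => hγt0 t)
      have h2 : ∀ t : ℕ, x ^ ((γ ^ t)⁻¹ : ℝ)
          = Real.exp (Real.log x * (γ ^ t)⁻¹) :=
        fun t => Real.rpow_def_of_pos hx0 _
      refine Tendsto.congr (fun t => (h2 t).symm)
        (Real.tendsto_exp_atTop.comp ?_)
      exact (tendsto_const_mul_atTop_of_pos (Real.log_pos hx1)).mpr h1
    -- the tail of f 0 tends to zero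
    have hT_nonneg : ∀ t : ℕ, (0:ℝ) ≤ ∫ y in Set.Ioi (x ^ ((γ ^ t)⁻¹ : ℝ)), f 0 y :=
      fun t => setIntegral_nonneg measurableSet_Ioi fun y _ => hf0_nonneg y
    have hT0 : Tendsto (fun t : ℕ => ∫ y in Set.Ioi (x ^ ((γ ^ t)⁻¹ : ℝ)), f 0 y)
        atTop (nhds 0) := by
      have heq : ∀ t : ℕ, (∫ y in Set.Ioi (x ^ ((γ ^ t)⁻¹ : ℝ)), f 0 y)
          = ∫ y in Set.Ici (1:ℝ),
              (Set.Ioi (x ^ ((γ ^ t)⁻¹ : ℝ))).indicator (f 0) y := by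
        intro t
        rw [setIntegral_indicator measurableSet_Ioi,
          Set.inter_eq_self_of_subset_right
            (show Set.Ioi (x ^ ((γ ^ t)⁻¹ : ℝ)) ⊆ Set.Ici (1:ℝ) from
              fun y hy => le_trans (hX1 t) (le_of_lt hy))]
      have hdom := tendsto_integral_of_dominated_convergence
        (μ := volume.restrict (Set.Ici (1:ℝ)))
        (F := fun (t : ℕ) (y : ℝ) => (Set.Ioi (x ^ ((γ ^ t)⁻¹ : ℝ))).indicator (f 0) y)
        (f := fun _ => (0:ℝ)) (bound := fun y => ‖f 0 y‖)
        (fun t => hf0_int.aestronglyMeasurable.indicator measurableSet_Ioi)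
        hf0_int.norm
        (fun t => Eventually.of_forall fun y => norm_indicator_le_norm_self _ _)
        (Eventually.of_forall fun y => by
          refine Tendsto.congr' ?_ tendsto_const_nhds
          filter_upwards [hXtop.eventually_ge_atTop y] with t ht
          exact (Set.indicator_of_notMem (by simpa using ht) _).symm)
      rw [integral_zero] at hdom
      exact Tendsto.congr (fun t => (heq t).symm) hdom
    -- squeeze
    have hmain : ∀ t : ℕ, (∫ z in Set.Icc (1:ℝ) x, f t z)
        = (∫ y in Set.Icc (1:ℝ) (x ^ ((γ ^ t)⁻¹ : ℝ)), y ^ (-(s t)) * f 0 y)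
          / (∫ y in Set.Ici (1:ℝ), y ^ (-(s t)) * f 0 y) :=
      fun t => (key t).2 x hx1.le
    have hub : ∀ t : ℕ, (∫ z in Set.Icc (1:ℝ) x, f t z) ≤ 1 := by
      intro t
      rw [hmain t, div_le_one (key t).1]
      exact setIntegral_mono_set (hg_int _ (hs_nonneg t))
        (Eventually.of_forall fun y => hg_nonneg _ (hs_nonneg t) y)
        (HasSubset.Subset.eventuallyLE Set.Icc_subset_Ici_self)
    have hlb : ∀ t : ℕ, 1 - (∫ y in Set.Ioi (x ^ ((γ ^ t)⁻¹ : ℝ)), f 0 y)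
          / (∫ y in Set.Ici (1:ℝ), y ^ (-(1 - γ)⁻¹) * f 0 y)
        ≤ ∫ z in Set.Icc (1:ℝ) x, f t z := by
      intro t
      have hD := (key t).1
      set X := x ^ ((γ ^ t)⁻¹ : ℝ) with hXdef
      have hIoisub : Set.Ioi X ⊆ Set.Ici (1:ℝ) :=
        fun y hy => le_trans (hX1 t) (le_of_lt hy)
      have hsplit : (∫ y in Set.Ici (1:ℝ), y ^ (-(s t)) * f 0 y)
          = (∫ y in Set.Icc (1:ℝ) X, y ^ (-(s t)) * f 0 y)
            + ∫ y in Set.Ioi X, y ^ (-(s t)) * f 0 y := by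
        rw [← setIntegral_union (Disjoint.mono_left Set.Icc_subset_Iic_self
            (Set.Iic_disjoint_Ioi le_rfl)) measurableSet_Ioi
          ((hg_int _ (hs_nonneg t)).mono_set Set.Icc_subset_Ici_self)
          ((hg_int _ (hs_nonneg t)).mono_set hIoisub),
          Set.Icc_union_Ioi_eq_Ici (hX1 t)]
      have htail_le : (∫ y in Set.Ioi X, y ^ (-(s t)) * f 0 y)
          ≤ ∫ y in Set.Ioi X, f 0 y := by
        refine setIntegral_mono_on ((hg_int _ (hs_nonneg t)).mono_set hIoisub)
          (hf0_int.mono_set hIoisub) measurableSet_Ioi fun y hy => ?_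
        have hy1 : (1:ℝ) ≤ y := hIoisub hy
        have h1 : y ^ (-(s t) : ℝ) ≤ 1 :=
          Real.rpow_le_one_of_one_le_of_nonpos hy1 (neg_nonpos.mpr (hs_nonneg t))
        nlinarith [hf0_nonneg y, Real.rpow_nonneg (le_trans zero_le_one hy1 : (0:ℝ) ≤ y) (-(s t))]
      have hDge : (∫ y in Set.Ici (1:ℝ), y ^ (-(1 - γ)⁻¹) * f 0 y)
          ≤ ∫ y in Set.Ici (1:ℝ), y ^ (-(s t)) * f 0 y := by
        refine setIntegral_mono_on (hg_int _ hS0) (hg_int _ (hs_nonneg t))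
          measurableSet_Ici fun y hy => ?_
        have hy1 : (1:ℝ) ≤ y := hy
        exact mul_le_mul_of_nonneg_right
          (Real.rpow_le_rpow_of_exponent_le hy1 (neg_le_neg (hs_le t)))
          (hf0_nonneg y)
      rw [hmain t]
      set N := ∫ y in Set.Icc (1:ℝ) X, y ^ (-(s t)) * f 0 y with hNdef
      set D := ∫ y in Set.Ici (1:ℝ), y ^ (-(s t)) * f 0 y with hDdef
      set T := ∫ y in Set.Ioi X, f 0 y with hTdef
      have h1 : D - N ≤ T := by
        have := htail_le
        linarith [hsplit]
      have h2 : (D - N) / D ≤ T / (∫ y in Set.Ici (1:ℝ), y ^ (-(1 - γ)⁻¹) * f 0 y) :=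
        div_le_div₀ (hT_nonneg t) h1 hDinf_pos hDge
      have h3 : 1 - (D - N) / D = N / D := by
        field_simp
        ring
      linarith
    have hlim : Tendsto (fun t : ℕ => 1 - (∫ y in Set.Ioi (x ^ ((γ ^ t)⁻¹ : ℝ)), f 0 y)
        / (∫ y in Set.Ici (1:ℝ), y ^ (-(1 - γ)⁻¹) * f 0 y)) atTop (nhds 1) := by
      have h := (hT0.div_const (∫ y in Set.Ici (1:ℝ), y ^ (-(1 - γ)⁻¹) * f 0 y)).const_sub 1
      simpa using h
    exact tendsto_of_tendsto_of_tendsto_of_le_of_le hlim tendsto_const_nhds hlb hub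
end
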